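/- Let A be a Boolean algebra and X ⊆ A a subset such that A is ω-free over X. Then the set X \ {0} is ω-independent in A. -/

import Mathlib

universe u v

/-- A function `f` (restricted to `X`) is ω-preserving: for every finite `H ⊆ X`
with `inf H = ⊥`, the infimum of the image is `⊥`. -/
def OmegaPreserving {α : Type u} {β : Type v} [BooleanAlgebra α] [BooleanAlgebra β]
    (X : Set α) (f : α → β) : Prop :=
  ∀ H : Finset α, ↑H ⊆ X → H.inf id = ⊥ → H.inf f = ⊥

/-- `A` is ω-free over `X`: every ω-preserving function from `X` into any nontrivial
Boolean algebra extends to a unique Boolean algebra homomorphism. -/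
def OmegaFree {α : Type u} [BooleanAlgebra α] (X : Set α) : Prop :=
  ∀ (β : Type v) [BooleanAlgebra β] [Nontrivial β] (f : α → β),
    OmegaPreserving X f → ∃! g : BoundedLatticeHom α β, ∀ x ∈ X, g x = f x

/-- `X` is ω-independent: `⊥ ∉ X`, (⊥1) no nonempty finite `F ⊆ X` has `sup F = ⊤`, and
(⊥3) if `⊥ ≠ inf F ≤ sup G` for nonempty finite `F, G ⊆ X` then `F ∩ G ≠ ∅`. -/
def OmegaIndependent {α : Type u} [BooleanAlgebra α] (X : Set α) : Prop :=
  ⊥ ∉ X ∧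
  (∀ F : Finset α, ↑F ⊆ X → F.Nonempty → F.sup id ≠ ⊤) ∧
  (∀ F G : Finset α, ↑F ⊆ X → ↑G ⊆ X → F.Nonempty → G.Nonempty →
    F.inf id ≠ ⊥ → F.inf id ≤ G.sup id → ((F : Set α) ∩ (G : Set α)).Nonempty)

/-- If `A` is ω-free over `X`, then `X \ {⊥}` is ω-independent. -/
theorem omegaFree_omegaIndependent {α : Type u} [BooleanAlgebra α] (X : Set α)
    (h : OmegaFree.{u, v} X) : OmegaIndependent (X \ {⊥}) := by
  classical
  haveI : Nontrivial (Set PUnit.{v+1}) :=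
    ⟨⊥, ⊤, by simp [Set.bot_eq_empty, Set.top_eq_univ, Set.eq_univ_iff_forall]⟩
  have hXsub : X \ {⊥} ⊆ X := Set.diff_subset
  refine ⟨fun hx => hx.2 rfl, ?_, ?_⟩
  · -- (⊥1)
    intro F hF hFne hsup
    obtain ⟨x, hxF⟩ := hFne
    have hxX := hF hxF
    have hnt : (⊥ : α) ≠ ⊤ := by
      intro e
      exact hxX.2 (le_bot_iff.mp (le_top.trans_eq e.symm))
    set f : α → Set PUnit.{v+1} := fun _ => ⊥ with hf
    have hp : ∀ H : Finset α, ↑H ⊆ X → H.inf id = ⊥ → H.inf f = ⊥ := by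
      intro H hH hHinf
      rcases H.eq_empty_or_nonempty with rfl | ⟨y, hy⟩
      · simp at hHinf; exact absurd hHinf.symm hnt
      · exact le_bot_iff.mp ((Finset.inf_le hy).trans le_rfl)
    obtain ⟨g, hg, -⟩ := h (Set PUnit.{v+1}) f hp
    have hgsup : g (F.sup id) = ⊥ := by
      refine le_bot_iff.mp ?_
      rw [map_finset_sup g F id]
      exact Finset.sup_le fun y hy => (hg y (hXsub (hF hy))).le
    rw [hsup, map_top] at hgsup
    exact top_ne_bot hgsup
  · -- (⊥3)
    intro F G hF hG hFne hGne hFinf hle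
    by_contra hdisj
    rw [Set.not_nonempty_iff_eq_empty] at hdisj
    obtain ⟨x, hxF⟩ := hFne
    have hnt : (⊥ : α) ≠ ⊤ := by
      intro e
      exact (hF hxF).2 (le_bot_iff.mp (le_top.trans_eq e.symm))
    set f : α → Set PUnit.{v+1} := fun a => if a ∈ F then ⊤ else ⊥ with hf
    have hp : ∀ H : Finset α, ↑H ⊆ X → H.inf id = ⊥ → H.inf f = ⊥ := by
      intro H hH hHinf
      by_cases hHF : H ⊆ F
      · exact absurd (le_bot_iff.mp (hHinf ▸ Finset.inf_mono hHF)) hFinf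
      · obtain ⟨y, hyH, hyF⟩ := Finset.not_subset.mp hHF
        refine le_bot_iff.mp ((Finset.inf_le hyH).trans ?_)
        simp [hf, hyF]
    obtain ⟨g, hg, -⟩ := h (Set PUnit.{v+1}) f hp
    have hginf : g (F.inf id) = ⊤ := by
      refine top_le_iff.mp ?_
      rw [map_finset_inf g F id]
      refine le_trans ?_ (le_refl _)
      refine Finset.le_inf fun y hy => ?_
      rw [Function.comp_apply, id_eq, hg y (hXsub (hF hy))]
      simp [hf, hy]
    have hgsup : g (G.sup id) = ⊥ := by
      refine le_bot_iff.mp ?_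
      rw [map_finset_sup g G id]
      refine Finset.sup_le fun y hy => ?_
      have hyF : y ∉ F := by
        intro hyF
        exact Set.eq_empty_iff_forall_notMem.mp hdisj y ⟨hyF, hy⟩
      rw [Function.comp_apply, id_eq, hg y (hXsub (hG hy))]
      simp [hf, hyF]
    have : (⊤ : Set PUnit.{v+1}) ≤ ⊥ := by
      rw [← hginf, ← hgsup]
      exact OrderHomClass.mono g hle
    exact top_ne_bot (le_bot_iff.mp this)
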